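/- Let ν be a probability measure on S and ε > 0. Suppose (b₀^FE, b^FE) is an optimal FELP solution, i.e. its value function V^FE := V(b₀^FE, b^FE) satisfies the ALP (Bellman) constraints and ∫_S V^FE dν ≥ ∫_S V(b₀,b) dν for every FELP-feasible pair (b₀,b). Suppose further there exist C < ∞ and a pair (b̄₀, b̄) with ‖b̄‖_{∞,ρ} ≤ C such that sup_{s∈S} |V*(s) − V(b̄₀,b̄)(s)| ≤ ε. Then ∫_S |V*(s) − V^FE(s)| ν(ds) ≤ 2ε/(1−γ). -/

import Mathlib

open MeasureTheory ProbabilityTheory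

/-- The random basis function `φ(s;θ) = φ̄(⟨(1,s), θ⟩)`. -/
noncomputable def phi (d : ℕ) (phibar : ℝ → ℝ)
    (θ : EuclideanSpace ℝ (Fin (d + 1))) (s : EuclideanSpace ℝ (Fin d)) : ℝ :=
  phibar (θ 0 + ∑ i : Fin d, s i * θ i.succ)

lemma phi_meas' {d : ℕ} {phibar : ℝ → ℝ} (hc : Continuous phibar)
    {X : Type*} [MeasurableSpace X] {σ : X → EuclideanSpace ℝ (Fin d)} (hσ : Measurable σ) :
    Measurable fun p : X × EuclideanSpace ℝ (Fin (d+1)) => phi d phibar p.2 (σ p.1) := by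
  unfold phi
  apply hc.measurable.comp
  apply Measurable.add
  · exact (measurable_pi_apply 0).comp ((WithLp.measurable_ofLp 2 _).comp measurable_snd)
  · apply Finset.measurable_sum
    intro i _
    exact ((measurable_pi_apply (i : Fin d)).comp ((WithLp.measurable_ofLp 2 _).comp (hσ.comp measurable_fst))).mul
          ((measurable_pi_apply i.succ).comp ((WithLp.measurable_ofLp 2 _).comp measurable_snd))

lemma integrable_of_bdd' {X : Type*} [MeasurableSpace X] {μ : Measure X} [IsFiniteMeasure μ]
    {f : X → ℝ} {M : ℝ} (hf : Measurable f) (hM : ∀ x, |f x| ≤ M) : Integrable f μ :=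
  (integrable_const M).mono' hf.aestronglyMeasurable
    (ae_of_all _ fun x => by rw [Real.norm_eq_abs]; exact hM x)

lemma integral_le_of_bdd' {X : Type*} [MeasurableSpace X] {μ : Measure X}
    [IsProbabilityMeasure μ] {f : X → ℝ} {K : ℝ} (hf : Integrable f μ) (h : ∀ x, f x ≤ K) :
    ∫ x, f x ∂μ ≤ K := by
  calc ∫ x, f x ∂μ ≤ ∫ _x, K ∂μ := integral_mono hf (integrable_const K) h
    _ = K := by simp

lemma abs_integral_le_of_bdd' {X : Type*} [MeasurableSpace X] {μ : Measure X}
    [IsProbabilityMeasure μ] {f : X → ℝ} {M : ℝ} (hf : Measurable f) (hM : ∀ x, |f x| ≤ M) :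
    |∫ x, f x ∂μ| ≤ M := by
  rw [← Real.norm_eq_abs]
  refine (norm_integral_le_integral_norm f).trans ?_
  calc ∫ x, ‖f x‖ ∂μ ≤ ∫ _x, M ∂μ :=
        integral_mono (integrable_of_bdd' hf hM).norm (integrable_const M)
          (fun x => by rw [Real.norm_eq_abs]; exact hM x)
    _ = M := by simp

lemma Vgen_props {d : ℕ} {phibar : ℝ → ℝ} (hc : Continuous phibar) (hpb : ∀ x, |phibar x| ≤ 1)
    {ρ : EuclideanSpace ℝ (Fin (d+1)) → ℝ} (hρ_int : Integrable ρ)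
    (hρ_one : ∫ θ, ρ θ = 1)
    {b : EuclideanSpace ℝ (Fin (d+1)) → ℝ} (hb : Measurable b) {C : ℝ}
    (hbC : ∀ θ, |b θ| ≤ C * ρ θ)
    {X : Type*} [MeasurableSpace X] {σ : X → EuclideanSpace ℝ (Fin d)} (hσ : Measurable σ) :
    (∀ x : X, Integrable (fun θ => b θ * phi d phibar θ (σ x))) ∧
    (∀ x : X, |∫ θ, b θ * phi d phibar θ (σ x)| ≤ C) ∧
    Measurable (fun x => ∫ θ, b θ * phi d phibar θ (σ x)) := by
  have hnorm : ∀ (x : X) θ, ‖b θ * phi d phibar θ (σ x)‖ ≤ C * ρ θ := by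
    intro x θ
    rw [Real.norm_eq_abs, abs_mul]
    calc |b θ| * |phi d phibar θ (σ x)| ≤ (C * ρ θ) * 1 :=
          mul_le_mul (hbC θ) (hpb _) (abs_nonneg _) (le_trans (abs_nonneg _) (hbC θ))
      _ = C * ρ θ := mul_one _
  have hmeas : ∀ x : X, Measurable fun θ => b θ * phi d phibar θ (σ x) := by
    intro x
    exact hb.mul ((phi_meas' hc hσ).comp (measurable_const.prodMk measurable_id))
  have hint : ∀ x : X, Integrable (fun θ => b θ * phi d phibar θ (σ x)) := by
    intro x
    exact (hρ_int.const_mul C).mono' (hmeas x).aestronglyMeasurable (ae_of_all _ (hnorm x))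
  refine ⟨hint, fun x => ?_, ?_⟩
  · calc |∫ θ, b θ * phi d phibar θ (σ x)| ≤ ∫ θ, C * ρ θ := by
          rw [← Real.norm_eq_abs]
          exact (norm_integral_le_integral_norm _).trans
            (integral_mono (hint x).norm (hρ_int.const_mul C) (hnorm x))
      _ = C := by rw [integral_const_mul, hρ_one, mul_one]
  · have : StronglyMeasurable fun p : X × EuclideanSpace ℝ (Fin (d+1)) =>
        b p.2 * phi d phibar p.2 (σ p.1) :=
      (hb.comp measurable_snd).stronglyMeasurable.mul (phi_meas' hc hσ).stronglyMeasurable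
    exact this.integral_prod_right'.measurable
/-- Optimal FELP solutions are `2ε/(1−γ)`-close to `V*` in `(1,ν)`-norm,
provided some pair `(bbar₀, bbar)` with `‖bbar‖_{∞,ρ} ≤ C < ∞` gives a uniform `ε`-approximation
of `V*`. -/
theorem stmt_2
    {d : ℕ} (Sset : Set (EuclideanSpace ℝ (Fin d)))
    (D : ℝ) (hD : ∀ s ∈ Sset, Real.sqrt (1 + ‖s‖ ^ 2) ≤ D + 1)
    {A : Type*} [MeasurableSpace A]
    (Act : ↥Sset → Set A) (hAct : ∀ s, (Act s).Nonempty)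
    (c : ↥Sset × A → ℝ) (hc_meas : Measurable c) (hc_bdd : ∃ M, ∀ p, |c p| ≤ M)
    (γ : ℝ) (hγ0 : 0 ≤ γ) (hγ1 : γ < 1)
    (P : Kernel (↥Sset × A) ↥Sset) [IsMarkovKernel P]
    (Vstar : ↥Sset → ℝ) (hVstar_meas : Measurable Vstar)
    (hVstar_bdd : ∃ M, ∀ s, |Vstar s| ≤ M)
    (hBellman : ∀ s : ↥Sset,
      Vstar s = ⨅ a : Act s, (c (s, (a : A)) + γ * ∫ s', Vstar s' ∂(P (s, (a : A)))))
    (L : NNReal) (phibar : ℝ → ℝ) (hLip : LipschitzWith L phibar)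
    (hphibar_bdd : ∀ x, |phibar x| ≤ 1)
    (ρ : EuclideanSpace ℝ (Fin (d + 1)) → ℝ) (hρ_meas : Measurable ρ)
    (hρ_pos : ∀ θ, 0 < ρ θ)
    (hρ_prob : IsProbabilityMeasure (volume.withDensity fun θ => ENNReal.ofReal (ρ θ)))
    (ν : Measure ↥Sset) [IsProbabilityMeasure ν]
    (ε : ℝ) (hε : 0 < ε)
    -- the optimal FELP solution (b₀FE, bFE) with value function VFE
    (b₀FE : ℝ) (bFE : EuclideanSpace ℝ (Fin (d + 1)) → ℝ) (hbFE_meas : Measurable bFE)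
    (hbFE_fin : ∃ C : ℝ, ∀ θ, |bFE θ| ≤ C * ρ θ)
    (VFE : ↥Sset → ℝ)
    (hVFE : ∀ s : ↥Sset, VFE s = b₀FE + ∫ θ, bFE θ * phi d phibar θ (s : EuclideanSpace ℝ (Fin d)))
    (hVFE_ALP : ∀ s : ↥Sset, ∀ a ∈ Act s,
      VFE s - γ * ∫ s', VFE s' ∂(P (s, a)) ≤ c (s, a))
    (hVFE_opt : ∀ (b₀ : ℝ) (b : EuclideanSpace ℝ (Fin (d + 1)) → ℝ), Measurable b →
      (∃ C : ℝ, ∀ θ, |b θ| ≤ C * ρ θ) →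
      (∀ s : ↥Sset, ∀ a ∈ Act s,
        (b₀ + ∫ θ, b θ * phi d phibar θ (s : EuclideanSpace ℝ (Fin d)))
          - γ * ∫ s', (b₀ + ∫ θ, b θ * phi d phibar θ (s' : EuclideanSpace ℝ (Fin d)))
              ∂(P (s, a)) ≤ c (s, a)) →
      ∫ s, (b₀ + ∫ θ, b θ * phi d phibar θ (s : EuclideanSpace ℝ (Fin d))) ∂ν
        ≤ ∫ s, VFE s ∂ν)
    -- a uniformly ε-accurate function in R_C(φ, ρ)
    (hRC : ∃ (C : ℝ) (bbar₀ : ℝ) (bbar : EuclideanSpace ℝ (Fin (d + 1)) → ℝ),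
      Measurable bbar ∧ (∀ θ, |bbar θ| ≤ C * ρ θ) ∧
      ∀ s : ↥Sset,
        |Vstar s - (bbar₀ + ∫ θ, bbar θ * phi d phibar θ (s : EuclideanSpace ℝ (Fin d)))| ≤ ε) :
    ∫ s, |Vstar s - VFE s| ∂ν ≤ 2 * ε / (1 - γ) := by
  -- basic facts about ρ
  have hρ_nonneg : ∀ θ, 0 ≤ ρ θ := fun θ => (hρ_pos θ).le
  have h1 : (∫⁻ θ, ENNReal.ofReal (ρ θ)) = 1 := by
    have h := hρ_prob.measure_univ
    rwa [withDensity_apply _ MeasurableSet.univ, setLIntegral_univ] at h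
  have hρ_int : Integrable ρ := by
    refine ⟨hρ_meas.aestronglyMeasurable, ?_⟩
    rw [hasFiniteIntegral_iff_ofReal (ae_of_all _ hρ_nonneg), h1]
    exact ENNReal.one_lt_top
  have hρ_one : ∫ θ, ρ θ = 1 := by
    rw [integral_eq_lintegral_of_nonneg_ae (ae_of_all _ hρ_nonneg)
      hρ_meas.aestronglyMeasurable, h1, ENNReal.toReal_one]
  -- the state space is nonempty
  have hne : Nonempty ↥Sset := by
    by_contra h
    rw [not_nonempty_iff] at h
    have h2 := measure_univ (μ := ν)
    rw [Set.univ_eq_empty_iff.mpr h, measure_empty] at h2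
    exact zero_ne_one h2
  obtain ⟨Mstar, hMstar⟩ := hVstar_bdd
  obtain ⟨Mc, hMc⟩ := hc_bdd
  obtain ⟨CFE, hCFE⟩ := hbFE_fin
  obtain ⟨C, bbar₀, bbar, hbbar_meas, hbbarC, happrox⟩ := hRC
  -- properties of VFE
  obtain ⟨hFE_int, hFE_bd, hFE_meas⟩ :=
    Vgen_props hLip.continuous hphibar_bdd hρ_int hρ_one hbFE_meas hCFE
      (measurable_subtype_coe)
  have hVFE_meas : Measurable VFE := by
    have : VFE = fun s : ↥Sset => b₀FE + ∫ θ, bFE θ * phi d phibar θ (s : EuclideanSpace ℝ (Fin d)) :=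
      funext hVFE
    rw [this]; exact measurable_const.add hFE_meas
  have hVFE_bd : ∀ s, |VFE s| ≤ |b₀FE| + CFE := by
    intro s
    rw [hVFE s]
    exact (abs_add_le _ _).trans (by linarith [hFE_bd s])
  -- properties of Vbar := bbar₀ + ∫ bbar * phi
  obtain ⟨hbar_int, hbar_bd, hbar_meas⟩ :=
    Vgen_props hLip.continuous hphibar_bdd hρ_int hρ_one hbbar_meas hbbarC
      (measurable_subtype_coe)
  set gbar : ↥Sset → ℝ :=
    fun s => ∫ θ, bbar θ * phi d phibar θ (s : EuclideanSpace ℝ (Fin d)) with hgbar_def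
  -- Step A: VFE ≤ Vstar pointwise
  set K : ℝ := sSup (Set.range fun s => VFE s - Vstar s) with hK_def
  have hbddK : BddAbove (Set.range fun s => VFE s - Vstar s) := by
    refine ⟨|b₀FE| + CFE + Mstar, ?_⟩
    rintro _ ⟨s, rfl⟩
    have h5 := abs_le.mp (hVFE_bd s)
    have h6 := abs_le.mp (hMstar s)
    show VFE s - Vstar s ≤ |b₀FE| + CFE + Mstar
    linarith [h5.2, h6.1]
  have hKmem : ∀ s, VFE s - Vstar s ≤ K := fun s => le_csSup hbddK ⟨s, rfl⟩
  have hstep : ∀ s, VFE s - Vstar s ≤ γ * K := by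
    intro s
    have hnea : Nonempty ↥(Act s) := (hAct s).to_subtype
    refine le_of_forall_pos_le_add ?_
    intro η hη
    have hlt : (⨅ a : Act s, (c (s, (a : A)) + γ * ∫ s', Vstar s' ∂(P (s, (a : A)))))
        < Vstar s + η := by
      rw [← hBellman s]; linarith
    obtain ⟨a, ha⟩ := exists_lt_of_ciInf_lt hlt
    have h2 := hVFE_ALP s a a.2
    have hintV : Integrable VFE (P (s, (a : A))) := integrable_of_bdd' hVFE_meas hVFE_bd
    have hintVs : Integrable Vstar (P (s, (a : A))) := integrable_of_bdd' hVstar_meas hMstar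
    have h3 : (∫ s', VFE s' ∂(P (s, (a : A)))) - ∫ s', Vstar s' ∂(P (s, (a : A))) ≤ K := by
      rw [← integral_sub hintV hintVs]
      exact integral_le_of_bdd' (hintV.sub hintVs) (fun s' => hKmem s')
    have h4 := mul_le_mul_of_nonneg_left h3 hγ0
    linarith
  have hK0 : K ≤ 0 := by
    have hKle : K ≤ γ * K := by
      refine csSup_le (Set.range_nonempty _) ?_
      rintro _ ⟨s, rfl⟩
      exact hstep s
    nlinarith
  have hle : ∀ s, VFE s ≤ Vstar s := fun s => by linarith [hKmem s, hK0]
  -- Step B: the shifted approximation is FELP-feasible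
  set δ : ℝ := ε * (1 + γ) / (1 - γ) with hδ_def
  have h1γ : (0:ℝ) < 1 - γ := by linarith
  have hδγ : δ * (1 - γ) = ε * (1 + γ) := by
    rw [hδ_def]; field_simp
  have hstar_le : ∀ s : ↥Sset, ∀ a ∈ Act s,
      Vstar s ≤ c (s, a) + γ * ∫ s', Vstar s' ∂(P (s, a)) := by
    intro s a ha
    have hnea : Nonempty ↥(Act s) := (hAct s).to_subtype
    rw [hBellman s]
    refine ciInf_le ?_ (⟨a, ha⟩ : ↥(Act s))
    refine ⟨-Mc - γ * Mstar, ?_⟩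
    rintro _ ⟨a', rfl⟩
    have h5 := abs_le.mp (hMc (s, (a' : A)))
    have h6 := abs_le.mp (abs_integral_le_of_bdd' (μ := P (s, (a' : A))) hVstar_meas hMstar)
    have h7 := mul_le_mul_of_nonneg_left h6.1 hγ0
    show -Mc - γ * Mstar ≤ c (s, (a' : A)) + γ * ∫ s', Vstar s' ∂(P (s, (a' : A)))
    linarith
  have hfeas : ∀ s : ↥Sset, ∀ a ∈ Act s,
      ((bbar₀ - δ) + ∫ θ, bbar θ * phi d phibar θ (s : EuclideanSpace ℝ (Fin d)))
        - γ * ∫ s', ((bbar₀ - δ) + ∫ θ, bbar θ * phi d phibar θ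
            (s' : EuclideanSpace ℝ (Fin d))) ∂(P (s, a)) ≤ c (s, a) := by
    intro s a ha
    have hgint : Integrable gbar (P (s, a)) := integrable_of_bdd' hbar_meas hbar_bd
    have hci : Integrable (fun _ : ↥Sset => bbar₀ - δ) (P (s, a)) := integrable_const _
    have heq : (∫ s', ((bbar₀ - δ) + gbar s') ∂(P (s, a)))
        = (bbar₀ - δ) + ∫ s', gbar s' ∂(P (s, a)) := by
      rw [integral_add hci hgint, integral_const]
      simp
    show ((bbar₀ - δ) + gbar s) - γ * ∫ s', ((bbar₀ - δ) + gbar s') ∂(P (s, a)) ≤ c (s, a)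
    rw [heq]
    have hintVs : Integrable Vstar (P (s, a)) := integrable_of_bdd' hVstar_meas hMstar
    have hint1 : Integrable (fun s' => bbar₀ + gbar s') (P (s, a)) :=
      (integrable_const bbar₀).add hgint
    have hint2 : Integrable (fun s' => (bbar₀ + gbar s') + ε) (P (s, a)) :=
      hint1.add (integrable_const ε)
    have hI1 : (∫ s', Vstar s' ∂(P (s, a))) ≤ bbar₀ + (∫ s', gbar s' ∂(P (s, a))) + ε := by
      have hmono : (∫ s', Vstar s' ∂(P (s, a)))
          ≤ ∫ s', ((bbar₀ + gbar s') + ε) ∂(P (s, a)) := by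
        refine integral_mono hintVs hint2 ?_
        intro s'
        show Vstar s' ≤ (bbar₀ + gbar s') + ε
        have := abs_le.mp (happrox s')
        linarith [this.2]
      rwa [integral_add hint1 (integrable_const ε),
        integral_add (integrable_const bbar₀) hgint, integral_const, integral_const,
        probReal_univ, one_smul, one_smul] at hmono
    have hI2 := mul_le_mul_of_nonneg_left hI1 hγ0
    have h7 := hstar_le s a ha
    have h8 := abs_le.mp (happrox s)
    linarith [h8.1]
  -- apply optimality
  have hopt := hVFE_opt (bbar₀ - δ) bbar hbbar_meas ⟨C, hbbarC⟩ hfeas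
  have hgνint : Integrable gbar ν := integrable_of_bdd' hbar_meas hbar_bd
  have hVstarν : Integrable Vstar ν := integrable_of_bdd' hVstar_meas hMstar
  have hVFEν : Integrable VFE ν := integrable_of_bdd' hVFE_meas hVFE_bd
  have hciν : Integrable (fun _ : ↥Sset => bbar₀ - δ) ν := integrable_const _
  have hoptL : (∫ s, ((bbar₀ - δ) + gbar s) ∂ν)
      = (bbar₀ - δ) + ∫ s, gbar s ∂ν := by
    rw [integral_add hciν hgνint, integral_const]
    simp
  have hint1ν : Integrable (fun s => bbar₀ + gbar s) ν := (integrable_const bbar₀).add hgνint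
  have hint2ν : Integrable (fun s => (bbar₀ + gbar s) + ε) ν := hint1ν.add (integrable_const ε)
  have hI3 : (∫ s, Vstar s ∂ν) ≤ bbar₀ + (∫ s, gbar s ∂ν) + ε := by
    have hmono : (∫ s, Vstar s ∂ν) ≤ ∫ s, ((bbar₀ + gbar s) + ε) ∂ν := by
      refine integral_mono hVstarν hint2ν ?_
      intro s'
      show Vstar s' ≤ (bbar₀ + gbar s') + ε
      have := abs_le.mp (happrox s')
      linarith [this.2]
    rwa [integral_add hint1ν (integrable_const ε),
      integral_add (integrable_const bbar₀) hgνint, integral_const, integral_const,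
      probReal_univ, one_smul, one_smul] at hmono
  have hkey : (∫ s, Vstar s ∂ν) - (∫ s, VFE s ∂ν) ≤ ε + δ := by
    have := hopt
    rw [hoptL] at this
    linarith
  -- conclude
  have habs : ∀ s, |Vstar s - VFE s| = Vstar s - VFE s :=
    fun s => abs_of_nonneg (by linarith [hle s])
  have hfin : ε + δ = 2 * ε / (1 - γ) := by
    rw [hδ_def]; field_simp; ring
  calc ∫ s, |Vstar s - VFE s| ∂ν = ∫ s, (Vstar s - VFE s) ∂ν := by
        exact integral_congr_ae (ae_of_all _ habs)
    _ = (∫ s, Vstar s ∂ν) - ∫ s, VFE s ∂ν := integral_sub hVstarν hVFEν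
    _ ≤ ε + δ := hkey
    _ = 2 * ε / (1 - γ) := hfin
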